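/- arXiv:1906.00206 — 3 statements merged into one kernel-verified Lean document; each statement's English description precedes it below -/
import Mathlib

section
/- Let d ∈ {1,2,3} and let Γ ⊂ ℝ^d be a locally finite discrete set. Suppose there exist R₀ > 0 and M > 0 such that #(Γ ∩ B_{R₀}(x)) ≤ M for every x ∈ ℝ^d. Then there exists R > 0 (one may take R = R₀/(2M)) such that every connected component of the R-neighborhood (Γ)_R = ⋃_{γ∈Γ} B_R(γ) is a bounded subset of ℝ^d. -/
open Set Metric

/-- If `Γ ⊂ ℝ^d` (`d = 1,2,3`, locally finite) has at most `M` points in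
every ball of radius `R₀`, then there is `R > 0` (one may take `R = R₀/(2M)`) such that
every connected component of the `R`-neighborhood `(Γ)_R = {x | dist x Γ < R}` is bounded. -/
theorem uniformly_bounded_counts_implies_bounded_components
    (d : ℕ) (hd : d = 1 ∨ d = 2 ∨ d = 3)
    (Γ : Set (EuclideanSpace ℝ (Fin d)))
    (hloc : ∀ K : Set (EuclideanSpace ℝ (Fin d)), IsCompact K → (Γ ∩ K).Finite)
    (R₀ : ℝ) (hR₀ : 0 < R₀) (M : ℕ) (hM : 0 < M)
    (hcount : ∀ x : EuclideanSpace ℝ (Fin d), (Γ ∩ ball x R₀).Finite ∧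
      (Γ ∩ ball x R₀).ncard ≤ M) :
    ∃ R : ℝ, 0 < R ∧ R = R₀ / (2 * M) ∧
      ∀ x ∈ {y : EuclideanSpace ℝ (Fin d) | ∃ γ ∈ Γ, dist y γ < R},
        Bornology.IsBounded
          (connectedComponentIn {y : EuclideanSpace ℝ (Fin d) | ∃ γ ∈ Γ, dist y γ < R} x) := by
  set R : ℝ := R₀ / (2 * M) with hRdef
  have hMpos : (0:ℝ) < (M:ℝ) := Nat.cast_pos.mpr hM
  have hMR : (0:ℝ) < 2 * M := by positivity
  have hR : 0 < R := div_pos hR₀ hMR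
  have h2RM : 2 * R * M = R₀ := by
    field_simp [hRdef]
    rw [hRdef, mul_div_assoc', div_mul_eq_mul_div, div_eq_iff hMR.ne']; ring
  refine ⟨R, hR, rfl, ?_⟩
  intro x hx
  set U : Set (EuclideanSpace ℝ (Fin d)) := {y : EuclideanSpace ℝ (Fin d) | ∃ γ ∈ Γ, dist y γ < R} with hUdef
  set C := connectedComponentIn U x with hCdef
  have hCU : C ⊆ U := connectedComponentIn_subset U x
  have hxC : x ∈ C := mem_connectedComponentIn hx
  have hCconn : IsPreconnected C := isPreconnected_connectedComponentIn
  -- balls around Γ-points meeting C are inside C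
  have hball_sub : ∀ γ ∈ Γ, (ball γ R ∩ C).Nonempty → ball γ R ⊆ C := by
    rintro γ hγ ⟨y, hy1, hy2⟩
    have hbU : ball γ R ⊆ U := fun z hz => ⟨γ, hγ, hz⟩
    have h1 : ball γ R ⊆ connectedComponentIn U y :=
      (convex_ball γ R).isPreconnected.subset_connectedComponentIn hy1 hbU
    have h2 : connectedComponentIn U x = connectedComponentIn U y :=
      connectedComponentIn_eq hy2
    show ball γ R ⊆ connectedComponentIn U x
    rw [h2]
    exact h1
  set S : Set (EuclideanSpace ℝ (Fin d)) := {γ ∈ Γ | (ball γ R ∩ C).Nonempty} with hSdef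
  have hSΓ : S ⊆ Γ := fun γ hγ => hγ.1
  -- C is covered by balls around S
  have hCcov : C ⊆ ⋃ γ ∈ S, ball γ R := by
    intro y hy
    obtain ⟨γ, hγ, hdy⟩ := hCU hy
    have hyb : y ∈ ball γ R := mem_ball.mpr hdy
    exact mem_biUnion ⟨hγ, ⟨y, hyb, hy⟩⟩ hyb
  obtain ⟨γ₀, hγ₀Γ, hxγ₀⟩ := hx
  have hxb : x ∈ ball γ₀ R := mem_ball.mpr hxγ₀
  have hγ₀S : γ₀ ∈ S := ⟨hγ₀Γ, ⟨x, hxb, hxC⟩⟩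
  -- reachability sets
  let Reach : ℕ → Set (EuclideanSpace ℝ (Fin d)) := fun k =>
    Nat.rec ({γ₀} : Set (EuclideanSpace ℝ (Fin d)))
      (fun _ Rk => Rk ∪ {γ ∈ S | ∃ γ' ∈ Rk, dist γ γ' < 2 * R}) k
  have hReach0 : Reach 0 = {γ₀} := rfl
  have hReachS : ∀ k, Reach (k+1) =
      Reach k ∪ {γ ∈ S | ∃ γ' ∈ Reach k, dist γ γ' < 2 * R} := fun k => rfl
  have hReachSub : ∀ k, Reach k ⊆ S := by
    intro k
    induction k with
    | zero => simpa [hReach0] using hγ₀S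
    | succ k ih =>
      rw [hReachS]
      rintro γ (hγ | hγ)
      · exact ih hγ
      · exact hγ.1
  have hReachMono : ∀ k, Reach k ⊆ Reach (k+1) := by
    intro k; rw [hReachS]; exact subset_union_left
  have hReachMono' : ∀ j k, j ≤ k → Reach j ⊆ Reach k := by
    intro j k hjk
    induction hjk with
    | refl => exact subset_rfl
    | step _ ih => exact ih.trans (hReachMono _)
  -- distance bound
  have hReachDist : ∀ k, ∀ γ ∈ Reach k, dist γ γ₀ < 2 * R * k ∨ γ = γ₀ := by
    intro k
    induction k with
    | zero => intro γ hγ; right; simpa [hReach0] using hγ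
    | succ k ih =>
      rw [hReachS]
      rintro γ (hγ | ⟨hγS, γ', hγ', hdist⟩)
      · rcases ih γ hγ with h | h
        · left
          calc dist γ γ₀ < 2 * R * k := h
          _ ≤ 2 * R * ((k:ℝ)+1) := by nlinarith
          _ = 2 * R * ((k+1 : ℕ) : ℝ) := by push_cast; ring
        · right; exact h
      · left
        rcases ih γ' hγ' with h | h
        · calc dist γ γ₀ ≤ dist γ γ' + dist γ' γ₀ := dist_triangle _ _ _
          _ < 2 * R + 2 * R * k := by linarith
          _ = 2 * R * ((k+1:ℕ):ℝ) := by push_cast; ring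
        · have hdist0 : dist γ γ₀ < 2 * R := h ▸ hdist
          calc dist γ γ₀ < 2 * R := hdist0
          _ ≤ 2 * R * ((k:ℝ)+1) := by nlinarith
          _ = 2 * R * ((k+1 : ℕ) : ℝ) := by push_cast; ring
  -- Reach M is contained in Γ ∩ ball γ₀ R₀
  have hReachM : Reach M ⊆ Γ ∩ ball γ₀ R₀ := by
    intro γ hγ
    refine ⟨hSΓ (hReachSub M hγ), mem_ball.mpr ?_⟩
    rcases hReachDist M γ hγ with h | h
    · calc dist γ γ₀ < 2 * R * M := h
      _ = R₀ := h2RM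
    · rw [h]; simpa using hR₀
  have hReachMfin : (Reach M).Finite := (hcount γ₀).1.subset hReachM
  have hReachMcard : (Reach M).ncard ≤ M :=
    le_trans (Set.ncard_le_ncard hReachM (hcount γ₀).1) (hcount γ₀).2
  -- some step stabilizes
  have hstab : ∃ k, k < M ∧ Reach (k+1) = Reach k := by
    refine Classical.byContradiction fun h => ?_
    push_neg at h
    have hgrow : ∀ k, k ≤ M → k + 1 ≤ (Reach k).ncard := by
      intro k
      induction k with
      | zero => intro _; simp [hReach0]
      | succ k ih =>
        intro hkM
        have hk : k < M := Nat.lt_of_succ_le hkM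
        have hss : Reach k ⊂ Reach (k+1) :=
          (hReachMono k).ssubset_of_ne (Ne.symm (h k hk))
        have hfin : (Reach (k+1)).Finite :=
          hReachMfin.subset (hReachMono' (k+1) M hkM)
        have := Set.ncard_lt_ncard hss hfin
        have := ih (Nat.le_of_lt hk)
        omega
    have := hgrow M le_rfl
    have h2 : (Reach M).ncard ≤ M := hReachMcard
    omega
  obtain ⟨k, hkM, hkstab⟩ := hstab
  -- S = Reach k by connectedness
  have hSReach : S ⊆ Reach k := by
    refine Classical.byContradiction fun hcon => ?_
    obtain ⟨γ₁, hγ₁S, hγ₁nR⟩ := Set.not_subset.mp hcon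
    set A : Set (EuclideanSpace ℝ (Fin d)) := ⋃ γ ∈ Reach k, ball γ R with hAdef
    set B : Set (EuclideanSpace ℝ (Fin d)) := ⋃ γ ∈ S \ Reach k, ball γ R with hBdef
    have hAopen : IsOpen A := isOpen_biUnion fun _ _ => isOpen_ball
    have hBopen : IsOpen B := isOpen_biUnion fun _ _ => isOpen_ball
    have hCAB : C ⊆ A ∪ B := by
      intro y hy
      obtain ⟨γ, hγ, hdy⟩ := hCU hy
      have hyb : y ∈ ball γ R := mem_ball.mpr hdy
      have hγS : γ ∈ S := ⟨hγ, ⟨y, hyb, hy⟩⟩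
      rcases Classical.em (γ ∈ Reach k) with hmem | hmem
      · exact Or.inl (mem_biUnion hmem hyb)
      · exact Or.inr (mem_biUnion ⟨hγS, hmem⟩ hyb)
    have hAB : A ∩ B = ∅ := by
      ext y
      simp only [mem_inter_iff, mem_empty_iff_false, iff_false]
      rintro ⟨hyA, hyB⟩
      obtain ⟨γ, hγ, hyγ⟩ := mem_iUnion₂.mp hyA
      obtain ⟨γ', hγ', hyγ'⟩ := mem_iUnion₂.mp hyB
      have hdist : dist γ' γ < 2 * R := by
        calc dist γ' γ ≤ dist γ' y + dist y γ := dist_triangle _ _ _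
        _ < R + R := by
            rw [mem_ball] at hyγ hyγ'
            rw [dist_comm γ' y]; linarith
        _ = 2 * R := by ring
      have : γ' ∈ Reach (k+1) := by
        rw [hReachS]
        exact Or.inr ⟨hγ'.1, γ, hγ, hdist⟩
      rw [hkstab] at this
      exact hγ'.2 this
    have hCA : (C ∩ A).Nonempty := by
      refine ⟨x, hxC, mem_biUnion ?_ hxb⟩
      exact hReachMono' 0 k (Nat.zero_le k) (by simp [hReach0])
    have hCB : (C ∩ B).Nonempty := by
      obtain ⟨y, hy1, hy2⟩ := hγ₁S.2
      exact ⟨y, hy2, mem_biUnion ⟨hγ₁S, hγ₁nR⟩ hy1⟩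
    have := hCconn A B hAopen hBopen hCAB hCA hCB
    obtain ⟨y, _, hyA, hyB⟩ := this
    exact absurd (Set.mem_inter hyA hyB) (by rw [hAB]; exact notMem_empty y)
  -- conclude: S finite, C bounded
  have hSfin : S.Finite := hReachMfin.subset
    ((hSReach).trans (hReachMono' k M (Nat.le_of_lt hkM)))
  have hbd : Bornology.IsBounded (⋃ γ ∈ S, ball γ R) :=
    (Bornology.isBounded_biUnion hSfin).mpr fun γ _ => isBounded_ball
  exact hbd.subset hCcov
end

section
/- Fix α < 0 and L > 0. Consider the equations (A): −2s/α = 1 + e^{−sL} and (B): −2s/α = 1 − e^{−sL} for s > 0. Then (A) has exactly one positive solution s₁(L) for every L > 0, while (B) has no positive solution when L ≤ −2/α and exactly one positive solution s₂(L) when L > −2/α. Moreover s₁ is continuous and strictly decreasing in L with lim_{L→0⁺} s₁(L) = −α and lim_{L→∞} s₁(L) = −α/2; and s₂ is continuous and strictly increasing with lim_{L→(−2/α)⁺} s₂(L) = 0 and lim_{L→∞} s₂(L) = −α/2. -/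
open Set Filter Topology


-- strict concavity inequality for h u = 1 - exp(-u*L) - u*c
lemma td_concave3 (L c x y z : ℝ) (hL : 0 < L) (hxy : x < y) (hyz : y < z) :
    (z - y) * (1 - Real.exp (-x*L) - x*c) + (y - x) * (1 - Real.exp (-z*L) - z*c)
      < (z - x) * (1 - Real.exp (-y*L) - y*c) := by
  have hxz : x < z := hxy.trans hyz
  have hd : 0 < z - x := by linarith
  have hne : (-x*L) ≠ (-z*L) := by
    intro h
    have : (z - x) * L = 0 := by linarith [h]
    nlinarith
  have ha : 0 < (z - y)/(z - x) := div_pos (by linarith) hd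
  have hb : 0 < (y - x)/(z - x) := div_pos (by linarith) hd
  have hab : (z - y)/(z - x) + (y - x)/(z - x) = 1 := by field_simp; ring
  have key := strictConvexOn_exp.2 (Set.mem_univ (-x*L)) (Set.mem_univ (-z*L)) hne ha hb hab
  simp only [smul_eq_mul] at key
  have harg : (z - y)/(z - x) * (-x*L) + (y - x)/(z - x) * (-z*L) = -y*L := by
    field_simp; ring
  rw [harg] at key
  have key2 : (z - x) * Real.exp (-y*L) < (z - y) * Real.exp (-x*L) + (y - x) * Real.exp (-z*L) := by
    have h1 : (z - y)/(z - x) * Real.exp (-x*L) + (y - x)/(z - x) * Real.exp (-z*L)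
        = ((z - y) * Real.exp (-x*L) + (y - x) * Real.exp (-z*L)) / (z - x) := by ring
    rw [h1, lt_div_iff₀ hd] at key
    linarith [key]
  nlinarith [key2]

-- sign of h below the root
lemma td_signB_below {L c s t : ℝ} (hL : 0 < L) (hs : 0 < s)
    (heq : s * c = 1 - Real.exp (-s*L)) (ht : 0 < t) (hts : t < s) :
    t * c < 1 - Real.exp (-t*L) := by
  have h := td_concave3 L c 0 t s hL ht hts
  simp only [neg_zero, zero_mul, Real.exp_zero] at h
  by_contra hcon
  push_neg at hcon
  nlinarith [h, heq, hcon, hs]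

-- sign of h above the root
lemma td_signB_above {L c s t : ℝ} (hL : 0 < L) (hs : 0 < s)
    (heq : s * c = 1 - Real.exp (-s*L)) (hst : s < t) :
    1 - Real.exp (-t*L) < t * c := by
  have h := td_concave3 L c 0 s t hL hs hst
  simp only [neg_zero, zero_mul, Real.exp_zero] at h
  by_contra hcon
  push_neg at hcon
  nlinarith [h, heq, hcon, hs, hst]

lemma td_existsA (c L : ℝ) (hc : 0 < c) (hL : 0 < L) :
    ∃ s : ℝ, 0 < s ∧ s * c = 1 + Real.exp (-s*L) := by
  have hcont : ContinuousOn (fun s : ℝ => 1 + Real.exp (-s*L) - s * c) (Icc 0 (2/c)) := by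
    fun_prop
  have h0 : (fun s : ℝ => 1 + Real.exp (-s*L) - s * c) 0 = 2 := by norm_num
  have h2 : (fun s : ℝ => 1 + Real.exp (-s*L) - s * c) (2/c) < 0 := by
    have h1 : Real.exp (-(2/c)*L) < 1 := by
      rw [Real.exp_lt_one_iff]
      have : 0 < 2/c := by positivity
      nlinarith
    have : (2/c) * c = 2 := by field_simp
    simp only []
    nlinarith
  have hle : (0:ℝ) ≤ 2/c := by positivity
  have := intermediate_value_Icc' hle hcont (a := 0) (b := 2/c)
  have hmem : (0:ℝ) ∈ Icc ((fun s : ℝ => 1 + Real.exp (-s*L) - s * c) (2/c))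
      ((fun s : ℝ => 1 + Real.exp (-s*L) - s * c) 0) := by
    constructor
    · linarith
    · rw [h0]; norm_num
  obtain ⟨s, hsmem, hs0⟩ := this hmem
  refine ⟨s, ?_, by simp only [] at hs0; linarith⟩
  rcases eq_or_lt_of_le hsmem.1 with h | h
  · exfalso; rw [← h] at hs0; simp at hs0
  · exact h

lemma td_uniqueA (c L : ℝ) (hc : 0 < c) (hL : 0 < L) {s t : ℝ} (hs : 0 < s) (ht : 0 < t)
    (hes : s * c = 1 + Real.exp (-s*L)) (het : t * c = 1 + Real.exp (-t*L)) : s = t := by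
  rcases lt_trichotomy s t with h | h | h
  · exfalso
    have : Real.exp (-t*L) < Real.exp (-s*L) := Real.exp_lt_exp.mpr (by nlinarith)
    nlinarith
  · exact h
  · exfalso
    have : Real.exp (-s*L) < Real.exp (-t*L) := Real.exp_lt_exp.mpr (by nlinarith)
    nlinarith

lemma td_noB (c L : ℝ) (hc : 0 < c) (hL : 0 < L) (hLc : L ≤ c) {s : ℝ} (hs : 0 < s) :
    1 - Real.exp (-s*L) < s * c := by
  have h := Real.add_one_lt_exp (x := -(s*L)) (by nlinarith)
  have : -(s*L) = -s*L := by ring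
  rw [this] at h
  nlinarith

lemma td_existsB (c L : ℝ) (hc : 0 < c) (hcL : c < L) :
    ∃ s : ℝ, 0 < s ∧ s * c = 1 - Real.exp (-s*L) := by
  have hL : 0 < L := hc.trans hcL
  set s₀ : ℝ := (L - c)/(2*c*L) with hs₀def
  have hs₀ : 0 < s₀ := by apply div_pos <;> nlinarith
  -- h s₀ > 0 : s₀ * c < 1 - exp (-s₀ L)
  have hexp : Real.exp (-s₀*L) ≤ 1/(1 + s₀*L) := by
    have h1 : 1 + s₀*L ≤ Real.exp (s₀*L) := by
      have := Real.add_one_le_exp (s₀*L); linarith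
    have h2 : 0 < 1 + s₀*L := by nlinarith
    rw [le_div_iff₀ h2]
    calc Real.exp (-s₀*L) * (1 + s₀*L) ≤ Real.exp (-s₀*L) * Real.exp (s₀*L) := by
            apply mul_le_mul_of_nonneg_left h1 (Real.exp_pos _).le
      _ = 1 := by rw [← Real.exp_add]; ring_nf; exact Real.exp_zero
  have h2 : 0 < 1 + s₀*L := by nlinarith
  have hcl : s₀ * (2*c*L) = L - c := by
    rw [hs₀def]; field_simp
  have h3 : s₀ * c * (1 + s₀*L) < s₀ * L := by
    nlinarith [hcl, mul_pos hs₀ (sub_pos.2 hcL), hs₀, hc, hL]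
  have hinv : 1/(1 + s₀*L) * (1 + s₀*L) = 1 := by field_simp
  have hpos : s₀ * c < 1 - Real.exp (-s₀*L) := by
    nlinarith [h3, h2, hinv, hexp, Real.exp_pos (-s₀*L)]
  have hs₀lt : s₀ < 2/c := by
    rw [lt_div_iff₀ hc]
    nlinarith [h3, h2, mul_pos hs₀ hL]
  have hcont : ContinuousOn (fun s : ℝ => 1 - Real.exp (-s*L) - s * c) (Icc s₀ (2/c)) := by
    fun_prop
  have hneg : (fun s : ℝ => 1 - Real.exp (-s*L) - s * c) (2/c) < 0 := by
    have : (2/c) * c = 2 := by field_simp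
    simp only []
    nlinarith [Real.exp_pos (-(2/c)*L)]
  have hmem : (0:ℝ) ∈ Icc ((fun s : ℝ => 1 - Real.exp (-s*L) - s * c) (2/c))
      ((fun s : ℝ => 1 - Real.exp (-s*L) - s * c) s₀) := by
    constructor
    · linarith
    · simp only []; linarith
  obtain ⟨s, hsmem, hs0⟩ := intermediate_value_Icc' hs₀lt.le hcont hmem
  exact ⟨s, hs₀.trans_le hsmem.1, by simp only [] at hs0; linarith⟩


lemma td_uniqueB (c L : ℝ) (hL : 0 < L) {s t : ℝ} (hs : 0 < s) (ht : 0 < t)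
    (hes : s * c = 1 - Real.exp (-s*L)) (het : t * c = 1 - Real.exp (-t*L)) : s = t := by
  rcases lt_trichotomy s t with h | h | h
  · exfalso; have := td_signB_below hL ht het hs h; linarith
  · exact h
  · exfalso; have := td_signB_below hL hs hes ht h; linarith

lemma td_exp_lin_tendsto (a : ℝ) (ha : 0 < a) :
    Tendsto (fun L : ℝ => Real.exp (-a*L)) atTop (𝓝 0) := by
  have h2 : Tendsto (fun L : ℝ => -a * L) atTop atBot :=
    (tendsto_const_mul_atBot_of_neg (by linarith)).mpr tendsto_id
  exact Real.tendsto_exp_atBot.comp h2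

lemma td_s1 (c : ℝ) (hc : 0 < c) (s₁ : ℝ → ℝ)
    (H : ∀ L : ℝ, 0 < L → 0 < s₁ L ∧ s₁ L * c = 1 + Real.exp (-(s₁ L) * L)) :
    ContinuousOn s₁ (Ioi 0) ∧ StrictAntiOn s₁ (Ioi 0) ∧
      Tendsto s₁ (𝓝[>] (0:ℝ)) (𝓝 (2/c)) ∧ Tendsto s₁ atTop (𝓝 (1/c)) := by
  have hub : ∀ L : ℝ, 0 < L → s₁ L < 2/c := by
    intro L hL
    obtain ⟨h1, h2⟩ := H L hL
    have hE : Real.exp (-(s₁ L)*L) < 1 := by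
      rw [Real.exp_lt_one_iff]; nlinarith
    rw [lt_div_iff₀ hc]; linarith
  have hlb : ∀ L : ℝ, 0 < L → 1/c < s₁ L := by
    intro L hL
    obtain ⟨h1, h2⟩ := H L hL
    rw [div_lt_iff₀ hc]; nlinarith [Real.exp_pos (-(s₁ L)*L)]
  refine ⟨?_, ?_, ?_, ?_⟩
  · -- continuity
    intro L₀ hL₀
    apply ContinuousAt.continuousWithinAt
    rw [ContinuousAt, Metric.tendsto_nhds]
    intro ε hε
    obtain ⟨hs₀, he₀⟩ := H L₀ hL₀
    set s₀ := s₁ L₀ with hs₀def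
    have hv1 : (s₀ - ε)*c - 1 - Real.exp (-(s₀-ε)*L₀) < 0 := by
      have hE : Real.exp (-s₀*L₀) < Real.exp (-(s₀-ε)*L₀) :=
        Real.exp_lt_exp.mpr (by nlinarith [mem_Ioi.mp hL₀])
      nlinarith
    have hv2 : 0 < (s₀ + ε)*c - 1 - Real.exp (-(s₀+ε)*L₀) := by
      have hE : Real.exp (-(s₀+ε)*L₀) < Real.exp (-s₀*L₀) :=
        Real.exp_lt_exp.mpr (by nlinarith [mem_Ioi.mp hL₀])
      nlinarith
    have hct1 : ContinuousAt (fun L => (s₀ - ε)*c - 1 - Real.exp (-(s₀-ε)*L)) L₀ := by fun_prop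
    have hct2 : ContinuousAt (fun L => (s₀ + ε)*c - 1 - Real.exp (-(s₀+ε)*L)) L₀ := by fun_prop
    have hev1 := hct1.eventually_lt_const hv1
    have hev2 := hct2.eventually_const_lt hv2
    have hev0 : ∀ᶠ L in 𝓝 L₀, 0 < L := eventually_gt_nhds (mem_Ioi.mp hL₀)
    filter_upwards [hev0, hev1, hev2] with L h0 h1 h2
    obtain ⟨hsL, heL⟩ := H L h0
    rw [Real.dist_eq, abs_lt]
    constructor
    · by_contra hcc
      push_neg at hcc
      have hle : s₁ L ≤ s₀ - ε := by linarith
      have hE : Real.exp (-(s₀-ε)*L) ≤ Real.exp (-(s₁ L)*L) :=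
        Real.exp_le_exp.mpr (by nlinarith)
      nlinarith
    · by_contra hcc
      push_neg at hcc
      have hle : s₀ + ε ≤ s₁ L := by linarith
      have hE : Real.exp (-(s₁ L)*L) ≤ Real.exp (-(s₀+ε)*L) :=
        Real.exp_le_exp.mpr (by nlinarith)
      nlinarith
  · -- strict anti
    intro a ha b hb hab
    by_contra hcon
    push_neg at hcon
    obtain ⟨ha1, ha2⟩ := H a (mem_Ioi.mp ha)
    obtain ⟨hb1, hb2⟩ := H b (mem_Ioi.mp hb)
    have hE : Real.exp (-(s₁ b)*b) < Real.exp (-(s₁ a)*a) :=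
      Real.exp_lt_exp.mpr (by nlinarith [mem_Ioi.mp ha])
    nlinarith
  · -- limit at 0⁺
    have hg : Tendsto (fun L : ℝ => (1 + Real.exp (-(2/c)*L))/c) (𝓝[>] (0:ℝ)) (𝓝 (2/c)) := by
      have hct : ContinuousAt (fun L : ℝ => (1 + Real.exp (-(2/c)*L))/c) 0 := by fun_prop
      have h' : Tendsto (fun L : ℝ => (1 + Real.exp (-(2/c)*L))/c) (𝓝[>] (0:ℝ))
          (𝓝 ((1 + Real.exp (-(2/c)*0))/c)) := hct.tendsto.mono_left nhdsWithin_le_nhds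
      have hval : (1 + Real.exp (-(2/c)*0))/c = 2/c := by norm_num
      rwa [hval] at h'
    apply tendsto_of_tendsto_of_tendsto_of_le_of_le' hg tendsto_const_nhds
    · filter_upwards [self_mem_nhdsWithin] with L hL
      have hL' := mem_Ioi.mp hL
      obtain ⟨h1, h2⟩ := H L hL'
      have hE : Real.exp (-(2/c)*L) ≤ Real.exp (-(s₁ L)*L) :=
        Real.exp_le_exp.mpr (by nlinarith [hub L hL'])
      rw [div_le_iff₀ hc]; linarith
    · filter_upwards [self_mem_nhdsWithin] with L hL
      exact (hub L (mem_Ioi.mp hL)).le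
  · -- limit at ∞
    have hg : Tendsto (fun L : ℝ => (1 + Real.exp (-(1/c)*L))/c) atTop (𝓝 (1/c)) := by
      have h0 : Tendsto (fun L : ℝ => Real.exp (-(1/c)*L)) atTop (𝓝 0) :=
        td_exp_lin_tendsto (1/c) (by positivity)
      have h' : Tendsto (fun L : ℝ => (1 + Real.exp (-(1/c)*L))/c) atTop (𝓝 ((1+0)/c)) :=
        (tendsto_const_nhds.add h0).div_const c
      have hval : ((1:ℝ)+0)/c = 1/c := by norm_num
      rwa [hval] at h'
    apply tendsto_of_tendsto_of_tendsto_of_le_of_le' tendsto_const_nhds hg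
    · filter_upwards [eventually_gt_atTop 0] with L hL
      exact (hlb L hL).le
    · filter_upwards [eventually_gt_atTop 0] with L hL
      obtain ⟨h1, h2⟩ := H L hL
      have hE : Real.exp (-(s₁ L)*L) ≤ Real.exp (-(1/c)*L) :=
        Real.exp_le_exp.mpr (by nlinarith [hlb L hL])
      rw [le_div_iff₀ hc]; linarith

lemma td_s2 (c : ℝ) (hc : 0 < c) (s₂ : ℝ → ℝ)
    (H : ∀ L : ℝ, c < L → 0 < s₂ L ∧ s₂ L * c = 1 - Real.exp (-(s₂ L) * L)) :
    ContinuousOn s₂ (Ioi c) ∧ StrictMonoOn s₂ (Ioi c) ∧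
      Tendsto s₂ (𝓝[>] c) (𝓝 0) ∧ Tendsto s₂ atTop (𝓝 (1/c)) := by
  have hub : ∀ L : ℝ, c < L → s₂ L < 1/c := by
    intro L hL
    obtain ⟨h1, h2⟩ := H L hL
    rw [lt_div_iff₀ hc]
    nlinarith [Real.exp_pos (-(s₂ L)*L)]
  have hmono : StrictMonoOn s₂ (Ioi c) := by
    intro a ha b hb hab
    have ha' := mem_Ioi.mp ha
    have hb' := mem_Ioi.mp hb
    have hb0 : 0 < b := hc.trans hb'
    obtain ⟨ha1, ha2⟩ := H a ha'
    obtain ⟨hb1, hb2⟩ := H b hb'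
    have hE : Real.exp (-(s₂ a)*b) < Real.exp (-(s₂ a)*a) :=
      Real.exp_lt_exp.mpr (by nlinarith)
    have hposa : s₂ a * c < 1 - Real.exp (-(s₂ a)*b) := by nlinarith
    rcases lt_trichotomy (s₂ a) (s₂ b) with h | h | h
    · exact h
    · exfalso; rw [h] at hposa; linarith [hb2]
    · exfalso
      have := td_signB_above (L := b) (c := c) hb0 hb1 hb2 h
      linarith
  refine ⟨?_, hmono, ?_, ?_⟩
  · -- continuity
    intro L₀ hL₀
    have hL₀' := mem_Ioi.mp hL₀
    have hL₀0 : 0 < L₀ := hc.trans hL₀'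
    apply ContinuousAt.continuousWithinAt
    rw [ContinuousAt, Metric.tendsto_nhds]
    intro ε hε
    obtain ⟨hs₀, he₀⟩ := H L₀ hL₀'
    set s₀ := s₂ L₀ with hs₀def
    have hev0 : ∀ᶠ L in 𝓝 L₀, c < L := eventually_gt_nhds hL₀'
    -- lower bound eventuality
    have hevlow : ∀ᶠ L in 𝓝 L₀, ∀ hcL : c < L, s₀ - ε < s₂ L := by
      rcases le_or_gt (s₀ - ε) 0 with hneg | hpos
      · filter_upwards with L hcL
        exact lt_of_le_of_lt hneg (H L hcL).1
      · have hv1 : 0 < 1 - Real.exp (-(s₀-ε)*L₀) - (s₀-ε)*c := by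
          have := td_signB_below (L := L₀) (c := c) hL₀0 hs₀ he₀ hpos (by linarith)
          linarith
        have hct : ContinuousAt (fun L => 1 - Real.exp (-(s₀-ε)*L) - (s₀-ε)*c) L₀ := by fun_prop
        filter_upwards [hct.eventually_const_lt hv1] with L hgt hcL
        obtain ⟨h1, h2⟩ := H L hcL
        by_contra hcc
        push_neg at hcc
        rcases eq_or_lt_of_le hcc with h | h
        · rw [h] at h2; linarith
        · have := td_signB_above (L := L) (c := c) (hc.trans hcL) h1 h2 h
          linarith
    have hevhigh : ∀ᶠ L in 𝓝 L₀, ∀ hcL : c < L, s₂ L < s₀ + ε := by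
      have hv2 : 1 - Real.exp (-(s₀+ε)*L₀) - (s₀+ε)*c < 0 := by
        have := td_signB_above (L := L₀) (c := c) hL₀0 hs₀ he₀ (by linarith : s₀ < s₀ + ε)
        linarith
      have hct : ContinuousAt (fun L => 1 - Real.exp (-(s₀+ε)*L) - (s₀+ε)*c) L₀ := by fun_prop
      filter_upwards [hct.eventually_lt_const hv2] with L hlt hcL
      obtain ⟨h1, h2⟩ := H L hcL
      by_contra hcc
      push_neg at hcc
      rcases eq_or_lt_of_le hcc with h | h
      · rw [← h] at h2; linarith
      · have := td_signB_below (L := L) (c := c) (hc.trans hcL) h1 h2 (by linarith) h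
        linarith
    filter_upwards [hev0, hevlow, hevhigh] with L h0 h1 h2
    rw [Real.dist_eq, abs_lt]
    exact ⟨by linarith [h1 h0], by linarith [h2 h0]⟩
  · -- limit at c⁺
    have hMo : MonotoneOn s₂ (Ioi c) := hmono.monotoneOn
    have hbdd : BddBelow (s₂ '' Ioi c) := by
      refine ⟨0, fun y hy => ?_⟩
      obtain ⟨L, hL, rfl⟩ := hy
      exact (H L (mem_Ioi.mp hL)).1.le
    have ht := hMo.tendsto_nhdsGT hbdd
    set m := sInf (s₂ '' Ioi c) with hm
    have hne : (s₂ '' Ioi c).Nonempty := ⟨s₂ (c+1), mem_image_of_mem _ (by simp)⟩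
    have hm0 : 0 ≤ m := le_csInf hne (by rintro y ⟨L, hL, rfl⟩; exact (H L (mem_Ioi.mp hL)).1.le)
    have hmeq : m = 0 := by
      rcases hm0.eq_or_lt with h | h
      · exact h.symm
      · exfalso
        have htc : Tendsto (fun L : ℝ => L) (𝓝[>] c) (𝓝 c) :=
          tendsto_id.mono_right nhdsWithin_le_nhds
        have e1 : Tendsto (fun L => s₂ L * c) (𝓝[>] c) (𝓝 (m * c)) := ht.mul_const c
        have einner : Tendsto (fun L => -(s₂ L) * L) (𝓝[>] c) (𝓝 (-m * c)) := ht.neg.mul htc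
        have e2 : Tendsto (fun L => 1 - Real.exp (-(s₂ L) * L)) (𝓝[>] c)
            (𝓝 (1 - Real.exp (-m * c))) :=
          tendsto_const_nhds.sub ((Real.continuous_exp.tendsto _).comp einner)
        have hev : (fun L => s₂ L * c) =ᶠ[𝓝[>] c] fun L => 1 - Real.exp (-(s₂ L) * L) :=
          eventuallyEq_of_mem self_mem_nhdsWithin fun L hL => (H L (mem_Ioi.mp hL)).2
        have heq : m * c = 1 - Real.exp (-m * c) :=
          tendsto_nhds_unique (e1.congr' hev) e2
        have hlt := Real.add_one_lt_exp (x := -(m*c)) (by nlinarith)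
        have hrw : -(m*c) = -m*c := by ring
        rw [hrw] at hlt
        nlinarith
    rw [hmeq] at ht
    exact ht
  · -- limit at ∞
    set m₁ := s₂ (c+1) with hm₁
    have hm₁pos : 0 < m₁ := (H (c+1) (by linarith)).1
    have hg : Tendsto (fun L : ℝ => (1 - Real.exp (-m₁*L))/c) atTop (𝓝 (1/c)) := by
      have h0 := td_exp_lin_tendsto m₁ hm₁pos
      have h' : Tendsto (fun L : ℝ => (1 - Real.exp (-m₁*L))/c) atTop (𝓝 ((1-0)/c)) :=
        (tendsto_const_nhds.sub h0).div_const c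
      have hval : ((1:ℝ)-0)/c = 1/c := by norm_num
      rwa [hval] at h'
    apply tendsto_of_tendsto_of_tendsto_of_le_of_le' hg tendsto_const_nhds
    · filter_upwards [eventually_ge_atTop (c+1)] with L hL
      have hcL : c < L := by linarith
      obtain ⟨h1, h2⟩ := H L hcL
      have hm₁le : m₁ ≤ s₂ L := by
        rcases eq_or_lt_of_le hL with h | h
        · exact le_of_eq (by rw [hm₁, h])
        · exact (hmono (by simp) (mem_Ioi.mpr hcL) h).le
      have hE : Real.exp (-(s₂ L)*L) ≤ Real.exp (-m₁*L) :=
        Real.exp_le_exp.mpr (by nlinarith [hc.trans hcL])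
      rw [div_le_iff₀ hc]; linarith
    · filter_upwards [eventually_gt_atTop c] with L hL
      exact (hub L hL).le

/-- two attractive δ-interactions in 1D. For `α < 0`, the equation
`−2s/α = 1 + e^{−sL}` has exactly one positive solution `s₁(L)` for every `L > 0`, and
`−2s/α = 1 − e^{−sL}` has no positive solution for `L ≤ −2/α` and exactly one positive
solution `s₂(L)` for `L > −2/α`; `s₁` is continuous strictly decreasing with limits `−α`
(at `0⁺`) and `−α/2` (at `∞`), and `s₂` is continuous strictly increasing with limits `0`
(at `(−2/α)⁺`) and `−α/2` (at `∞`). -/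
theorem two_delta_eigenvalue_equations_dim1 (α : ℝ) (hα : α < 0) :
    (∀ L : ℝ, 0 < L → ∃! s : ℝ, 0 < s ∧ -2 * s / α = 1 + Real.exp (-s * L)) ∧
    (∀ L : ℝ, 0 < L → L ≤ -2 / α →
      ¬ ∃ s : ℝ, 0 < s ∧ -2 * s / α = 1 - Real.exp (-s * L)) ∧
    (∀ L : ℝ, -2 / α < L → ∃! s : ℝ, 0 < s ∧ -2 * s / α = 1 - Real.exp (-s * L)) ∧
    (∀ s₁ : ℝ → ℝ,
      (∀ L : ℝ, 0 < L → 0 < s₁ L ∧ -2 * s₁ L / α = 1 + Real.exp (-(s₁ L) * L)) →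
      ContinuousOn s₁ (Ioi 0) ∧ StrictAntiOn s₁ (Ioi 0) ∧
      Tendsto s₁ (nhdsWithin 0 (Ioi 0)) (nhds (-α)) ∧
      Tendsto s₁ atTop (nhds (-α / 2))) ∧
    (∀ s₂ : ℝ → ℝ,
      (∀ L : ℝ, -2 / α < L → 0 < s₂ L ∧ -2 * s₂ L / α = 1 - Real.exp (-(s₂ L) * L)) →
      ContinuousOn s₂ (Ioi (-2 / α)) ∧ StrictMonoOn s₂ (Ioi (-2 / α)) ∧
      Tendsto s₂ (nhdsWithin (-2 / α) (Ioi (-2 / α))) (nhds 0) ∧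
      Tendsto s₂ atTop (nhds (-α / 2))) := by
  have hα0 : α ≠ 0 := hα.ne
  have hc : (0:ℝ) < -2/α := by
    rw [div_pos_iff]
    right
    constructor <;> [norm_num; exact hα]
  have hconv : ∀ s : ℝ, -2 * s / α = s * (-2/α) := fun s => by ring
  refine ⟨?_, ?_, ?_, ?_, ?_⟩
  · -- part 1
    intro L hL
    obtain ⟨s, hs, he⟩ := td_existsA (-2/α) L hc hL
    refine ⟨s, ⟨hs, by rw [hconv s]; exact he⟩, ?_⟩
    rintro t ⟨ht, het⟩
    rw [hconv t] at het
    exact td_uniqueA (-2/α) L hc hL ht hs het he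
  · -- part 2
    intro L hL hLc h
    obtain ⟨s, hs, he⟩ := h
    rw [hconv s] at he
    have := td_noB (-2/α) L hc hL hLc hs
    linarith
  · -- part 3
    intro L hL
    obtain ⟨s, hs, he⟩ := td_existsB (-2/α) L hc hL
    refine ⟨s, ⟨hs, by rw [hconv s]; exact he⟩, ?_⟩
    rintro t ⟨ht, het⟩
    rw [hconv t] at het
    exact td_uniqueB (-2/α) L (hc.trans hL) ht hs het he
  · -- part 4
    intro s₁ H
    have H' : ∀ L : ℝ, 0 < L → 0 < s₁ L ∧ s₁ L * (-2/α) = 1 + Real.exp (-(s₁ L) * L) :=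
      fun L hL => ⟨(H L hL).1, by rw [← hconv (s₁ L)]; exact (H L hL).2⟩
    obtain ⟨hcont, hanti, h0, hinf⟩ := td_s1 (-2/α) hc s₁ H'
    refine ⟨hcont, hanti, ?_, ?_⟩
    · have hval : 2/(-2/α) = -α := by field_simp
      rwa [hval] at h0
    · have hval : 1/(-2/α) = -α/2 := by field_simp
      rwa [hval] at hinf
  · -- part 5
    intro s₂ H
    have H' : ∀ L : ℝ, -2/α < L → 0 < s₂ L ∧ s₂ L * (-2/α) = 1 - Real.exp (-(s₂ L) * L) :=
      fun L hL => ⟨(H L hL).1, by rw [← hconv (s₂ L)]; exact (H L hL).2⟩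
    obtain ⟨hcont, hmono, h0, hinf⟩ := td_s2 (-2/α) hc s₂ H'
    refine ⟨hcont, hmono, h0, ?_⟩
    have hval : 1/(-2/α) = -α/2 := by field_simp
    rwa [hval] at hinf
end

section
/- Fix α ∈ ℝ and L > 0 and consider the equations (A): 4πα + s = e^{−sL}/L and (B): 4πα + s = −e^{−sL}/L for s > 0. If α ≥ 0, then (A) has no positive solution for L ≥ 1/(4πα) and exactly one positive solution s₁(L) for 0 < L < 1/(4πα), with s₁(L) → ∞ as L → 0⁺ and s₁(L) → 0 as L → 1/(4πα)⁻; and (B) has no positive solution. If α < 0, then (A) has exactly one positive solution s₁(L) for every L > 0, with s₁(L) → ∞ as L → 0⁺ and s₁(L) → −4πα as L → ∞; and (B) has no positive solution for L ≤ 1/(−4πα) and exactly one positive solution s₂(L) for L > 1/(−4πα), with s₂(L) → 0 as L → (1/(−4πα))⁺ and s₂(L) → −4πα as L → ∞. -/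
open Set Filter Topology Real

lemma one_sub_exp_lt' {x : ℝ} (hx : 0 < x) : 1 - Real.exp (-x) < x := by
  have := Real.add_one_lt_exp (x := -x) (by linarith)
  linarith

lemma expA_lt_one' {x : ℝ} (hx : x < 0) : Real.exp x < 1 := by
  rw [← Real.exp_zero]
  exact Real.exp_lt_exp.2 hx

lemma A_mono' (c L : ℝ) (hL : 0 < L) :
    StrictMono (fun s : ℝ => c + s - Real.exp (-s * L) / L) := by
  have h1 : StrictMono (fun s : ℝ => c + s) := fun a b h => by dsimp; linarith
  have h2 : Monotone (fun s : ℝ => -(Real.exp (-s * L) / L)) := by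
    intro a b hab
    dsimp
    have he : Real.exp (-b * L) ≤ Real.exp (-a * L) :=
      Real.exp_le_exp.2 (by nlinarith)
    have : Real.exp (-b * L) / L ≤ Real.exp (-a * L) / L :=
      (div_le_div_iff_of_pos_right hL).2 he
    linarith
  simpa [sub_eq_add_neg] using h1.add_monotone h2

lemma A_exists_unique' (c L : ℝ) (hL : 0 < L) (h0 : c < 1 / L) :
    ∃! s : ℝ, 0 < s ∧ c + s = Real.exp (-s * L) / L := by
  set F := fun s : ℝ => c + s - Real.exp (-s * L) / L with hF
  have hcont : Continuous F := by
    apply Continuous.sub (by continuity)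
    exact ((Real.continuous_exp.comp (by continuity)).div_const L)
  have hB : (0:ℝ) < 1 / L - c + 1 := by linarith
  have hF0 : F 0 < 0 := by
    simp only [hF, neg_zero, zero_mul, Real.exp_zero]
    linarith
  have hFB : 0 < F (1 / L - c + 1) := by
    have he : Real.exp (-(1 / L - c + 1) * L) ≤ 1 :=
      le_of_lt (expA_lt_one' (by nlinarith))
    have : Real.exp (-(1 / L - c + 1) * L) / L ≤ 1 / L :=
      (div_le_div_iff_of_pos_right hL).2 he
    simp only [hF]
    linarith
  obtain ⟨s, hsmem, hsval⟩ := intermediate_value_Ioo (le_of_lt hB) hcont.continuousOn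
    (Set.mem_Ioo.2 ⟨hF0, hFB⟩)
  refine ⟨s, ⟨hsmem.1, by have := hsval; simp [hF] at this ⊢; linarith⟩, ?_⟩
  rintro t ⟨ht0, hteq⟩
  have : F t = F s := by
    simp only [hF]
    have : F s = 0 := hsval
    simp only [hF] at this
    linarith
  exact (A_mono' c L hL).injective this

lemma B_mono' (c L : ℝ) (hL : 0 < L) {a b : ℝ} (ha : 0 < a) (hab : a < b) :
    c + a + Real.exp (-a * L) / L < c + b + Real.exp (-b * L) / L := by
  have key : Real.exp (-a * L) - Real.exp (-b * L) < (b - a) * L := by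
    have h1 : Real.exp (-b * L) = Real.exp (-a * L) * Real.exp (-((b - a) * L)) := by
      rw [← Real.exp_add]; ring_nf
    have h2 : 1 - Real.exp (-((b - a) * L)) < (b - a) * L :=
      one_sub_exp_lt' (by nlinarith)
    have h3 : Real.exp (-a * L) < 1 := expA_lt_one' (by nlinarith)
    have h4 : 0 < Real.exp (-a * L) := Real.exp_pos _
    have h5 : Real.exp (-((b - a) * L)) < 1 := expA_lt_one' (by nlinarith)
    nlinarith
  have hdiv : (Real.exp (-a * L) - Real.exp (-b * L)) / L < b - a := by
    rw [div_lt_iff₀ hL]; linarith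
  rw [sub_div] at hdiv
  linarith

lemma B_exists_unique' (c L : ℝ) (hL : 0 < L) (h0 : c + 1 / L < 0) :
    ∃! s : ℝ, 0 < s ∧ c + s = -(Real.exp (-s * L) / L) := by
  have hc : c < 0 := by
    have : 0 < 1 / L := by positivity
    linarith
  set G := fun s : ℝ => c + s + Real.exp (-s * L) / L with hG
  have hcont : Continuous G := by
    apply Continuous.add (by continuity)
    exact ((Real.continuous_exp.comp (by continuity)).div_const L)
  have hG0 : G 0 < 0 := by
    simp only [hG, neg_zero, zero_mul, Real.exp_zero]
    linarith
  have hGc : 0 < G (-c) := by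
    simp only [hG]
    have : 0 < Real.exp (-(-c) * L) / L := by positivity
    linarith
  obtain ⟨s, hsmem, hsval⟩ := intermediate_value_Ioo (by linarith : (0:ℝ) ≤ -c)
    hcont.continuousOn (Set.mem_Ioo.2 ⟨hG0, hGc⟩)
  refine ⟨s, ⟨hsmem.1, by simp only [hG] at hsval; linarith⟩, ?_⟩
  rintro t ⟨ht0, hteq⟩
  have hGt : G t = 0 := by simp only [hG]; linarith
  have hGs : G s = 0 := hsval
  by_contra hne
  rcases lt_or_gt_of_ne hne with h | h
  · have := B_mono' c L hL ht0 h
    simp only [hG] at hGt hGs; linarith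
  · have := B_mono' c L hL hsmem.1 h
    simp only [hG] at hGt hGs; linarith

lemma lim1' (c R : ℝ) (hR : 0 < R) (s : ℝ → ℝ)
    (hs : ∀ L, 0 < L → L < R → 0 < s L ∧ c + s L = Real.exp (-s L * L) / L) :
    Tendsto s (𝓝[>] (0:ℝ)) atTop := by
  rw [tendsto_atTop]
  intro M
  set M' := max M 1 with hM'def
  have hM' : 0 < M' := lt_of_lt_of_le one_pos (le_max_right _ _)
  set K := max (c + M') 1 with hKdef
  have hK : 0 < K := lt_of_lt_of_le one_pos (le_max_right _ _)
  set δ := min (min (Real.log 2 / M') (1 / (2 * K))) R with hδdef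
  have hlog2 : 0 < Real.log 2 := Real.log_pos (by norm_num)
  have hδ0 : 0 < δ := lt_min (lt_min (by positivity) (by positivity)) hR
  filter_upwards [Ioo_mem_nhdsGT_of_mem (Set.left_mem_Ico.2 hδ0)] with L hL
  have hL0 : 0 < L := hL.1
  have hLδ : L < δ := hL.2
  have hLR : L < R := lt_of_lt_of_le hLδ (min_le_right _ _)
  obtain ⟨hs0, heq⟩ := hs L hL0 hLR
  by_contra hcon
  push_neg at hcon
  have hsM' : s L < M' := lt_of_lt_of_le hcon (le_max_left _ _)
  have h1 : Real.exp (-(M' * L)) ≤ Real.exp (-s L * L) :=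
    Real.exp_le_exp.2 (by nlinarith)
  have hLlog : M' * L ≤ Real.log 2 := by
    have hL1 : L ≤ Real.log 2 / M' :=
      le_of_lt (lt_of_lt_of_le hLδ (le_trans (min_le_left _ _) (min_le_left _ _)))
    rw [le_div_iff₀ hM'] at hL1
    nlinarith
  have h2 : (1:ℝ)/2 ≤ Real.exp (-(M' * L)) := by
    rw [show (1:ℝ)/2 = Real.exp (-(Real.log 2)) by
      rw [Real.exp_neg, Real.exp_log (by norm_num)]; norm_num]
    exact Real.exp_le_exp.2 (by linarith)
  have h3 : (1/2) / L ≤ Real.exp (-s L * L) / L := by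
    apply div_le_div_of_nonneg_right (by linarith) hL0.le
  have h4 : K < (1/2) / L := by
    have hL2K : L < 1 / (2 * K) :=
      lt_of_lt_of_le hLδ (le_trans (min_le_left _ _) (min_le_right _ _))
    rw [lt_div_iff₀ (by positivity : (0:ℝ) < 2*K)] at hL2K
    rw [lt_div_iff₀ hL0]
    nlinarith
  have h5 : c + M' ≤ K := le_max_left _ _
  linarith

lemma lim2' (c : ℝ) (hc : 0 < c) (s : ℝ → ℝ)
    (hs : ∀ L, 0 < L → L < 1/c → 0 < s L ∧ c + s L = Real.exp (-s L * L) / L) :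
    Tendsto s (𝓝[<] (1/c)) (𝓝 0) := by
  have hmem : Ioo (0:ℝ) (1/c) ∈ 𝓝[<] (1/c) :=
    Ioo_mem_nhdsLT_of_mem ⟨one_div_pos.2 hc, le_refl _⟩
  have htop : Tendsto (fun L : ℝ => 1/L - c) (𝓝[<] (1/c)) (𝓝 0) := by
    have hca : ContinuousAt (fun L : ℝ => 1/L - c) (1/c) :=
      ((continuousAt_const.div continuousAt_id (ne_of_gt (one_div_pos.2 hc))).sub continuousAt_const)
    have := hca.tendsto.mono_left (nhdsWithin_le_nhds (s := Iio (1/c)))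
    simpa [one_div_one_div] using this
  apply tendsto_of_tendsto_of_tendsto_of_le_of_le' tendsto_const_nhds htop
  · filter_upwards [hmem] with L hL
    exact le_of_lt (hs L hL.1 hL.2).1
  · filter_upwards [hmem] with L hL
    obtain ⟨hs0, heq⟩ := hs L hL.1 hL.2
    have he : Real.exp (-s L * L) < 1 :=
      expA_lt_one' (by nlinarith [mul_pos hs0 hL.1])
    have hd : Real.exp (-s L * L) / L ≤ 1 / L :=
      div_le_div_of_nonneg_right he.le hL.1.le
    linarith

lemma lim3' (c : ℝ) (hc : c < 0) (s : ℝ → ℝ)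
    (hs : ∀ L, 0 < L → 0 < s L ∧ c + s L = Real.exp (-s L * L) / L) :
    Tendsto s atTop (𝓝 (-c)) := by
  have htop : Tendsto (fun L : ℝ => -c + 1/L) atTop (𝓝 (-c)) := by
    have := tendsto_const_nhds (x := -c) (f := atTop (α := ℝ)) |>.add
      tendsto_inv_atTop_zero
    simpa [one_div] using this
  apply tendsto_of_tendsto_of_tendsto_of_le_of_le' tendsto_const_nhds htop
  · filter_upwards [eventually_gt_atTop (0:ℝ)] with L hL0
    obtain ⟨hs0, heq⟩ := hs L hL0
    have : 0 < Real.exp (-s L * L) / L := div_pos (Real.exp_pos _) hL0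
    linarith
  · filter_upwards [eventually_gt_atTop (0:ℝ)] with L hL0
    obtain ⟨hs0, heq⟩ := hs L hL0
    have he : Real.exp (-s L * L) < 1 :=
      expA_lt_one' (by nlinarith [mul_pos hs0 hL0])
    have hd : Real.exp (-s L * L) / L ≤ 1 / L :=
      div_le_div_of_nonneg_right he.le hL0.le
    linarith

lemma lim5' (c : ℝ) (hc : c < 0) (s : ℝ → ℝ)
    (hs : ∀ L, 1/(-c) < L → 0 < s L ∧ c + s L = -(Real.exp (-s L * L) / L)) :
    Tendsto s atTop (𝓝 (-c)) := by
  have hL₀ : 0 < 1/(-c) := one_div_pos.2 (by linarith)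
  have hlow : Tendsto (fun L : ℝ => -c - 1/L) atTop (𝓝 (-c)) := by
    have := tendsto_const_nhds (x := -c) (f := atTop (α := ℝ)) |>.sub
      tendsto_inv_atTop_zero
    simpa [one_div] using this
  apply tendsto_of_tendsto_of_tendsto_of_le_of_le' hlow tendsto_const_nhds
  · filter_upwards [eventually_gt_atTop (1/(-c))] with L hLgt
    obtain ⟨hs0, heq⟩ := hs L hLgt
    have hL0 : 0 < L := lt_trans hL₀ hLgt
    have he : Real.exp (-s L * L) ≤ 1 :=
      (expA_lt_one' (by nlinarith [mul_pos hs0 hL0])).le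
    have hd : Real.exp (-s L * L) / L ≤ 1 / L :=
      div_le_div_of_nonneg_right he hL0.le
    linarith
  · filter_upwards [eventually_gt_atTop (1/(-c))] with L hLgt
    obtain ⟨hs0, heq⟩ := hs L hLgt
    have hL0 : 0 < L := lt_trans hL₀ hLgt
    have : 0 < Real.exp (-s L * L) / L := div_pos (Real.exp_pos _) hL0
    linarith

lemma lim4' (c : ℝ) (hc : c < 0) (s : ℝ → ℝ)
    (hs : ∀ L, 1/(-c) < L → 0 < s L ∧ c + s L = -(Real.exp (-s L * L) / L)) :
    Tendsto s (𝓝[>] (1/(-c))) (𝓝 0) := by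
  set L₀ := 1/(-c) with hL₀def
  have hcpos : 0 < -c := by linarith
  have hL₀ : 0 < L₀ := one_div_pos.2 hcpos
  have hm : -c * L₀ = 1 := by
    rw [hL₀def]; field_simp; exact div_self (ne_of_lt hc)
  rw [tendsto_order]
  constructor
  · intro b hb
    filter_upwards [self_mem_nhdsWithin] with L hL
    exact lt_trans hb (hs L hL).1
  · intro ε hε
    have hcontφ : ContinuousAt (fun L : ℝ => c + ε + Real.exp (-ε * L) / L) L₀ := by
      have h1 : ContinuousAt (fun L : ℝ => Real.exp (-ε * L)) L₀ :=
        (Real.continuous_exp.comp (continuous_const.mul continuous_id)).continuousAt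
      exact continuousAt_const.add (h1.div continuousAt_id (ne_of_gt hL₀))
    have hE : 1 - ε * L₀ < Real.exp (-ε * L₀) := by
      have := one_sub_exp_lt' (mul_pos hε hL₀)
      rw [neg_mul]
      linarith
    have hφpos : 0 < c + ε + Real.exp (-ε * L₀) / L₀ := by
      have hdm : Real.exp (-ε * L₀) / L₀ * L₀ = Real.exp (-ε * L₀) :=
        div_mul_cancel₀ _ (ne_of_gt hL₀)
      have h6 : 0 < (c + ε + Real.exp (-ε * L₀) / L₀) * L₀ := by nlinarith
      by_contra hcon
      push_neg at hcon
      nlinarith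
    have hev : ∀ᶠ L in 𝓝[>] L₀, 0 < c + ε + Real.exp (-ε * L) / L :=
      (hcontφ.tendsto.mono_left (nhdsWithin_le_nhds (s := Ioi L₀))).eventually
        (eventually_gt_nhds hφpos)
    filter_upwards [hev, self_mem_nhdsWithin] with L hφL hLmem
    obtain ⟨hs0, heq⟩ := hs L hLmem
    have hL0 : 0 < L := lt_trans hL₀ hLmem
    by_contra hcon
    push_neg at hcon
    rcases eq_or_lt_of_le hcon with he | hlt
    · rw [he] at hφL
      linarith
    · have := B_mono' c L hL0 hε hlt
      linarith

/-- two point interactions in 3D: eigenvalue equations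
`4πα + s = ±e^{−sL}/L`. -/
theorem two_delta_eigenvalue_equations_dim3 (α : ℝ) :
    (0 ≤ α →
      (0 < α → ∀ L : ℝ, 1 / (4 * π * α) ≤ L →
        ¬ ∃ s : ℝ, 0 < s ∧ 4 * π * α + s = Real.exp (-s * L) / L) ∧
      (∀ L : ℝ, 0 < L → (α = 0 ∨ L < 1 / (4 * π * α)) →
        ∃! s : ℝ, 0 < s ∧ 4 * π * α + s = Real.exp (-s * L) / L) ∧
      (∀ s₁ : ℝ → ℝ,
        (∀ L : ℝ, 0 < L → (α = 0 ∨ L < 1 / (4 * π * α)) →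
          0 < s₁ L ∧ 4 * π * α + s₁ L = Real.exp (-(s₁ L) * L) / L) →
        Tendsto s₁ (nhdsWithin 0 (Ioi 0)) atTop ∧
        (0 < α → Tendsto s₁
          (nhdsWithin (1 / (4 * π * α)) (Iio (1 / (4 * π * α)))) (nhds 0))) ∧
      (∀ L : ℝ, 0 < L → ¬ ∃ s : ℝ, 0 < s ∧
        4 * π * α + s = -(Real.exp (-s * L) / L))) ∧
    (α < 0 →
      (∀ L : ℝ, 0 < L →
        ∃! s : ℝ, 0 < s ∧ 4 * π * α + s = Real.exp (-s * L) / L) ∧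
      (∀ s₁ : ℝ → ℝ,
        (∀ L : ℝ, 0 < L →
          0 < s₁ L ∧ 4 * π * α + s₁ L = Real.exp (-(s₁ L) * L) / L) →
        Tendsto s₁ (nhdsWithin 0 (Ioi 0)) atTop ∧
        Tendsto s₁ atTop (nhds (-(4 * π * α)))) ∧
      (∀ L : ℝ, 0 < L → L ≤ 1 / (-(4 * π * α)) →
        ¬ ∃ s : ℝ, 0 < s ∧ 4 * π * α + s = -(Real.exp (-s * L) / L)) ∧
      (∀ L : ℝ, 1 / (-(4 * π * α)) < L →
        ∃! s : ℝ, 0 < s ∧ 4 * π * α + s = -(Real.exp (-s * L) / L)) ∧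
      (∀ s₂ : ℝ → ℝ,
        (∀ L : ℝ, 1 / (-(4 * π * α)) < L →
          0 < s₂ L ∧ 4 * π * α + s₂ L = -(Real.exp (-(s₂ L) * L) / L)) →
        Tendsto s₂ (nhdsWithin (1 / (-(4 * π * α)))
          (Ioi (1 / (-(4 * π * α))))) (nhds 0) ∧
        Tendsto s₂ atTop (nhds (-(4 * π * α))))) := by
  have hπ : 0 < π := Real.pi_pos
  constructor
  · intro hα
    refine ⟨?_, ?_, ?_, ?_⟩
    · rintro hα0 L hLge ⟨s, hs0, heq⟩
      have hc : 0 < 4 * π * α := by positivity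
      have hL0 : 0 < L := lt_of_lt_of_le (one_div_pos.2 hc) hLge
      have h1 : 1 ≤ L * (4 * π * α) := (div_le_iff₀ hc).1 hLge
      have h2 : 1 / L ≤ 4 * π * α := by
        rw [div_le_iff₀ hL0]; nlinarith
      have he : Real.exp (-s * L) < 1 :=
        expA_lt_one' (by nlinarith [mul_pos hs0 hL0])
      have hd : Real.exp (-s * L) / L ≤ 1 / L :=
        div_le_div_of_nonneg_right he.le hL0.le
      linarith
    · intro L hL0 hcase
      apply A_exists_unique' _ L hL0
      rcases hcase with h | h
      · rw [h]
        simpa using one_div_pos.2 hL0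
      · rcases eq_or_lt_of_le hα with h0 | h0
        · exfalso
          rw [← h0] at h
          norm_num at h
          linarith
        · have hc : 0 < 4 * π * α := by positivity
          have h1 : L * (4 * π * α) < 1 := (lt_div_iff₀ hc).1 h
          rw [lt_div_iff₀ hL0]
          nlinarith
    · intro s₁ hs₁
      constructor
      · rcases eq_or_lt_of_le hα with h0 | h0
        · exact lim1' _ 1 one_pos s₁ (fun L hL _ => hs₁ L hL (Or.inl h0.symm))
        · have hc : 0 < 4 * π * α := by positivity
          exact lim1' _ (1 / (4 * π * α)) (one_div_pos.2 hc) s₁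
            (fun L hL hLR => hs₁ L hL (Or.inr hLR))
      · intro hα0
        have hc : 0 < 4 * π * α := by positivity
        exact lim2' _ hc s₁ (fun L hL hLR => hs₁ L hL (Or.inr hLR))
    · rintro L hL0 ⟨s, hs0, heq⟩
      have h1 : 0 ≤ 4 * π * α := by positivity
      have h2 : 0 < Real.exp (-s * L) / L := div_pos (Real.exp_pos _) hL0
      linarith
  · intro hα
    have hc : 4 * π * α < 0 := by
      have h4 : (0:ℝ) < 4 * π := by positivity
      nlinarith
    have hL₀pos : 0 < 1 / (-(4 * π * α)) := one_div_pos.2 (by linarith)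
    refine ⟨?_, ?_, ?_, ?_, ?_⟩
    · intro L hL0
      exact A_exists_unique' _ L hL0 (by linarith [one_div_pos.2 hL0])
    · intro s₁ hs₁
      exact ⟨lim1' _ 1 one_pos s₁ (fun L hL _ => hs₁ L hL), lim3' _ hc s₁ hs₁⟩
    · rintro L hL0 hLle ⟨s, hs0, heq⟩
      have h1 : L * (-(4 * π * α)) ≤ 1 := (le_div_iff₀ (by linarith)).1 hLle
      have h2 : -(4 * π * α) ≤ 1 / L := by
        rw [le_div_iff₀ hL0]; nlinarith
      have hkey : 1 - Real.exp (-s * L) < s * L := by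
        have := one_sub_exp_lt' (mul_pos hs0 hL0)
        rw [neg_mul]; linarith
      have hoL : (1 / L) * L = 1 := div_mul_cancel₀ 1 (ne_of_gt hL0)
      have h3 : 1 / L - s < Real.exp (-s * L) / L := by
        rw [lt_div_iff₀ hL0]
        nlinarith
      linarith
    · intro L hL₀lt
      have hL0 : 0 < L := lt_trans hL₀pos hL₀lt
      apply B_exists_unique' _ L hL0
      have h1 : 1 < L * (-(4 * π * α)) := (div_lt_iff₀ (by linarith)).1 hL₀lt
      have h2 : 1 / L < -(4 * π * α) := by
        rw [div_lt_iff₀ hL0]; nlinarith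
      linarith
    · intro s₂ hs₂
      exact ⟨lim4' _ hc s₂ hs₂, lim5' _ hc s₂ hs₂⟩
end
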